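/- Let k be an algebraically closed field of characteristic ≠ 2. There exist elements s, t in the ring k[y][[x]] (power series in x with polynomial coefficients in y) such that x - s² = (y² - x(x²-1))·t. -/

import Mathlib

open PowerSeries

noncomputable def sq2 (k : Type*) [Field k] : ℕ → k
  | 0 => 1
  | (n+1) => ((if n + 1 = 2 then (-1 : k) else 0)
      - ∑ i ∈ (Finset.Ico 1 (n+1)).attach, sq2 k i.1 * sq2 k (n + 1 - i.1)) / 2
  decreasing_by
  · have := (Finset.mem_Ico.mp i.2); omega
  · have := (Finset.mem_Ico.mp i.2); omega

lemma sq2_sum (k : Type*) [Field k] (h2 : (2:k) ≠ 0) (n : ℕ) :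
    ∑ i ∈ Finset.range (n+1), sq2 k i * sq2 k (n - i)
      = if n = 0 then 1 else if n = 2 then -1 else 0 := by
  cases n with
  | zero => simp [sq2]
  | succ m =>
    have hdec : ∑ i ∈ Finset.range (m+2), sq2 k i * sq2 k (m + 1 - i)
        = sq2 k 0 * sq2 k (m+1)
          + ((∑ i ∈ Finset.Ico 1 (m+1), sq2 k i * sq2 k (m + 1 - i))
            + sq2 k (m+1) * sq2 k 0) := by
      rw [Finset.range_eq_Ico, Finset.sum_eq_sum_Ico_succ_bot (by omega),
        Finset.sum_Ico_succ_top (by omega)]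
      simp
    have hval : sq2 k (m+1) = ((if m + 1 = 2 then (-1 : k) else 0)
        - ∑ i ∈ Finset.Ico 1 (m+1), sq2 k i * sq2 k (m + 1 - i)) / 2 := by
      rw [sq2, Finset.sum_attach (Finset.Ico 1 (m+1)) (fun i => sq2 k i * sq2 k (m + 1 - i))]
    rw [hdec, hval, sq2]
    field_simp
    split_ifs <;> [contradiction; ring; contradiction; ring]

lemma sq2_mk_sq (k : Type*) [Field k] (h2 : (2:k) ≠ 0) :
    (PowerSeries.mk (sq2 k)) * (PowerSeries.mk (sq2 k))
      = 1 - (PowerSeries.X : PowerSeries k) ^ 2 := by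
  ext n
  rw [PowerSeries.coeff_mul, Finset.Nat.sum_antidiagonal_eq_sum_range_succ_mk]
  simp only [PowerSeries.coeff_mk]
  rw [sq2_sum k h2 n]
  simp [PowerSeries.coeff_one, PowerSeries.coeff_X_pow]
  split_ifs <;> simp_all

theorem x_square_mod_elliptic_in_ky_x
    (k : Type*) [Field k] [IsAlgClosed k] (h2 : (2 : k) ≠ 0) :
    ∃ s t : PowerSeries (Polynomial k),
      (PowerSeries.X : PowerSeries (Polynomial k)) - s ^ 2
        = ((PowerSeries.C (Polynomial.X : Polynomial k)) ^ 2
            - PowerSeries.X * ((PowerSeries.X : PowerSeries (Polynomial k)) ^ 2 - 1))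
          * t := by
  obtain ⟨i, hi⟩ := IsAlgClosed.exists_pow_nat_eq (-1 : k) (n := 2) (by norm_num)
  set w : PowerSeries (Polynomial k) :=
    PowerSeries.C (Polynomial.C i)
      * PowerSeries.map Polynomial.C (PowerSeries.mk (sq2 k)) with hwdef
  have hw : w ^ 2 = (PowerSeries.X : PowerSeries (Polynomial k)) ^ 2 - 1 := by
    have : (PowerSeries.map (Polynomial.C : k →+* Polynomial k) (PowerSeries.mk (sq2 k))) ^ 2
        = 1 - (PowerSeries.X : PowerSeries (Polynomial k)) ^ 2 := by
      rw [← map_pow, sq, sq2_mk_sq k h2]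
      simp [map_sub, map_pow, PowerSeries.map_X]
    rw [hwdef, mul_pow, this, ← map_pow, ← map_pow, hi]
    simp
  have hi0 : i ≠ 0 := by intro h; rw [h] at hi; norm_num at hi
  have hiu : IsUnit w := by
    rw [PowerSeries.isUnit_iff_constantCoeff]
    have hc : PowerSeries.constantCoeff w = Polynomial.C i := by
      rw [hwdef]
      rw [← PowerSeries.coeff_zero_eq_constantCoeff_apply]
      simp [PowerSeries.coeff_map, PowerSeries.coeff_mk, sq2]
    rw [hc]
    exact (Polynomial.isUnit_C).mpr (isUnit_iff_ne_zero.mpr hi0)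
  clear_value w
  obtain ⟨W, hW⟩ := hiu
  refine ⟨PowerSeries.C (Polynomial.X : Polynomial k) * (↑W⁻¹ : PowerSeries (Polynomial k)),
    -((↑W⁻¹ : PowerSeries (Polynomial k)) ^ 2), ?_⟩
  have h1 : w * (↑W⁻¹ : PowerSeries (Polynomial k)) = 1 := by
    rw [← hW]; exact_mod_cast W.mul_inv
  have h2' : w ^ 2 * (↑W⁻¹ : PowerSeries (Polynomial k)) ^ 2 = 1 := by
    rw [← mul_pow, h1, one_pow]
  rw [← hw]
  linear_combination (-(PowerSeries.X : PowerSeries (Polynomial k))) * h2'
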